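/- Let n ≥ 4 and let q₂, …, q_n be reals with q_k > 1 for all k, and set Q(x) = 1 − x + ∑_{k=2}^n (−1)^k x^k / (q₂^{k−1} q₃^{k−2} ⋯ q_{k−1}² q_k). Fix j with 1 ≤ j ≤ n − 1 and let x ∈ (q₂ q₃ ⋯ q_j, q₂ q₃ ⋯ q_j q_{j+1}) (for j = 1 this interval is (1, q₂)). Then the moduli of the consecutive terms of Q satisfy 1 < x < x²/q₂ < x³/(q₂² q₃) < ⋯ < x^j/(q₂^{j−1} q₃^{j−2} ⋯ q_j) and x^j/(q₂^{j−1} q₃^{j−2} ⋯ q_j) > x^{j+1}/(q₂^{j} q₃^{j−1} ⋯ q_j² q_{j+1}) > ⋯ > x^n/(q₂^{n−1} q₃^{n−2} ⋯ q_{n−1}² q_n). -/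

import Mathlib

/-- Denominator `q₂^{k-1} q₃^{k-2} ⋯ q_{k-1}² q_k` of the `k`-th coefficient. -/
noncomputable def qden (q : ℕ → ℝ) (k : ℕ) : ℝ :=
  ∏ i ∈ Finset.Icc 2 k, q i ^ (k + 1 - i)

/-- The `k`-th term `x^k / (q₂^{k-1} q₃^{k-2} ⋯ q_k)` (in modulus). -/
noncomputable def qterm (q : ℕ → ℝ) (k : ℕ) (x : ℝ) : ℝ :=
  x ^ k / qden q k

/-- The product `q₂ q₃ ⋯ q_j` (equal to `1` for `j = 1`). -/
noncomputable def qprod (q : ℕ → ℝ) (j : ℕ) : ℝ :=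
  ∏ i ∈ Finset.Icc 2 j, q i

lemma qden_succ (q : ℕ → ℝ) (k : ℕ) :
    qden q (k + 1) = qden q k * qprod q (k + 1) := by
  rcases Nat.eq_zero_or_pos k with rfl | hk
  · simp [qden, qprod]
  have h1 : (∏ i ∈ Finset.Icc 2 (k + 1), q i ^ (k + 1 - i))
      = ∏ i ∈ Finset.Icc 2 k, q i ^ (k + 1 - i) := by
    rw [Finset.prod_Icc_succ_top (by omega : 2 ≤ k + 1)]
    simp
  unfold qden qprod
  rw [← h1, ← Finset.prod_mul_distrib]
  apply Finset.prod_congr rfl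
  intro i hi
  simp only [Finset.mem_Icc] at hi
  rw [← pow_succ]
  congr 1
  omega

lemma qprod_pos (q : ℕ → ℝ) (m : ℕ) (hq : ∀ i, 2 ≤ i → i ≤ m → 1 < q i) :
    0 < qprod q m := by
  apply Finset.prod_pos
  intro i hi
  simp only [Finset.mem_Icc] at hi
  linarith [hq i hi.1 hi.2]

lemma qden_pos (q : ℕ → ℝ) (m : ℕ) (hq : ∀ i, 2 ≤ i → i ≤ m → 1 < q i) :
    0 < qden q m := by
  apply Finset.prod_pos
  intro i hi
  simp only [Finset.mem_Icc] at hi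
  exact pow_pos (by linarith [hq i hi.1 hi.2]) _

lemma qprod_mono (q : ℕ → ℝ) (a b : ℕ) (ha : 1 ≤ a) (hab : a ≤ b)
    (hq : ∀ i, 2 ≤ i → i ≤ b → 1 < q i) :
    qprod q a ≤ qprod q b := by
  unfold qprod
  have hu : Finset.Icc 2 a ∪ Finset.Ioc a b = Finset.Icc 2 b := by
    ext i
    simp only [Finset.mem_union, Finset.mem_Icc, Finset.mem_Ioc]
    omega
  have hd : Disjoint (Finset.Icc 2 a) (Finset.Ioc a b) := by
    rw [Finset.disjoint_left]
    intro i hi hi'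
    simp only [Finset.mem_Icc] at hi
    simp only [Finset.mem_Ioc] at hi'
    omega
  rw [← hu, Finset.prod_union hd]
  have h1 : (1 : ℝ) ≤ ∏ i ∈ Finset.Ioc a b, q i := by
    have := Finset.prod_le_prod (s := Finset.Ioc a b)
      (f := fun _ => (1 : ℝ)) (g := q)
      (fun i _ => by norm_num)
      (fun i hi => by
        simp only [Finset.mem_Ioc] at hi
        show (1 : ℝ) ≤ q i
        linarith [hq i (by omega) hi.2])
    simpa using this
  have h2 : 0 < ∏ i ∈ Finset.Icc 2 a, q i := by
    apply Finset.prod_pos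
    intro i hi
    simp only [Finset.mem_Icc] at hi
    linarith [hq i hi.1 (by omega)]
  nlinarith

lemma qterm_succ (q : ℕ → ℝ) (k : ℕ) (x : ℝ) :
    qterm q (k + 1) x = qterm q k x * (x / qprod q (k + 1)) := by
  unfold qterm
  rw [qden_succ, pow_succ]
  ring

theorem qterm_monotonicity (n : ℕ) (hn : 4 ≤ n) (q : ℕ → ℝ)
    (hq : ∀ k, 2 ≤ k → k ≤ n → 1 < q k)
    (j : ℕ) (hj1 : 1 ≤ j) (hj2 : j ≤ n - 1)
    (x : ℝ) (hx : x ∈ Set.Ioo (qprod q j) (qprod q (j + 1))) :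
    (∀ k, 1 ≤ k → k ≤ j → qterm q (k - 1) x < qterm q k x) ∧
    (∀ k, j ≤ k → k < n → qterm q (k + 1) x < qterm q k x) := by
  obtain ⟨hx1, hx2⟩ := hx
  have hqj : ∀ m, m ≤ n → 0 < qprod q m := fun m hm =>
    qprod_pos q m (fun i h2 hi => hq i h2 (le_trans hi hm))
  have hxpos : 0 < x := lt_trans (hqj j (by omega)) hx1
  have hterm_pos : ∀ m, m ≤ n → 0 < qterm q m x := by
    intro m hm
    exact div_pos (pow_pos hxpos m)
      (qden_pos q m (fun i h2 hi => hq i h2 (le_trans hi hm)))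
  constructor
  · intro k hk1 hk2
    have hk : k - 1 + 1 = k := by omega
    rw [← hk, qterm_succ, hk]
    have hlt : qprod q k < x :=
      lt_of_le_of_lt (qprod_mono q k j hk1 hk2
        (fun i h2 hi => hq i h2 (by omega))) hx1
    have hp : 0 < qprod q k := hqj k (by omega)
    nth_rewrite 1 [show qterm q (k - 1) x = qterm q (k - 1) x * 1 by ring]
    apply mul_lt_mul_of_pos_left _ (hterm_pos (k - 1) (by omega))
    rw [lt_div_iff₀ hp]
    linarith
  · intro k hk1 hk2
    rw [qterm_succ]
    have hlt : x < qprod q (k + 1) :=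
      lt_of_lt_of_le hx2 (qprod_mono q (j + 1) (k + 1) (by omega) (by omega)
        (fun i h2 hi => hq i h2 (by omega)))
    have hp : 0 < qprod q (k + 1) := hqj (k + 1) (by omega)
    nth_rewrite 2 [show qterm q k x = qterm q k x * 1 by ring]
    apply mul_lt_mul_of_pos_left _ (hterm_pos k (by omega))
    rw [div_lt_iff₀ hp]
    linarith
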